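/- arXiv:2207.13484 — 2 statements merged into one kernel-verified Lean document; each statement's English description precedes it below -/
import Mathlib

section
/- Let B be a C*-algebra, X a right Hilbert C*-module over B, π : B → 𝓛(V) a representation of B on a Hilbert space V. Define on the algebraic tensor product X ⊗ V the sesquilinear form (x ⊗ v, x' ⊗ v') := ⟨v, π(⟨x,x'⟩_B)v'⟩_V. Then this form is positive semidefinite: for any finite sum ξ = Σᵢ xᵢ ⊗ vᵢ, one has (ξ, ξ) ≥ 0. -/
set_option maxHeartbeats 1000000


open scoped ComplexOrder

/-- Positivity of the interior tensor product form. For a right Hilbert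
C*-module `X` over `B` and a representation `π` of `B` on a Hilbert space `V`, the form
`(x ⊗ v, x' ⊗ v') := ⟨v, π(⟨x,x'⟩_B) v'⟩` is positive semidefinite on finite sums. -/
theorem stmt2
    {B X V : Type*}
    [NormedRing B] [StarRing B] [CStarRing B] [NormedAlgebra ℂ B] [CompleteSpace B]
    [StarModule ℂ B] [PartialOrder B] [StarOrderedRing B]
    [AddCommGroup X] [Module ℂ X]
    [NormedAddCommGroup V] [InnerProductSpace ℂ V] [CompleteSpace V]
    -- right Hilbert C*-module structure on X over B
    (rsmul : X → B → X)
    (hr_addl : ∀ x y b, rsmul (x + y) b = rsmul x b + rsmul y b)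
    (hr_mul : ∀ x b b', rsmul x (b * b') = rsmul (rsmul x b) b')
    (ip : X → X → B)
    (hip_addl : ∀ x y z, ip (x + y) z = ip x z + ip y z)
    (hip_addr : ∀ x y z, ip x (y + z) = ip x y + ip x z)
    (hip_smul : ∀ (c : ℂ) (x y : X), ip x (c • y) = c • ip x y)
    (hip_star : ∀ x y, star (ip x y) = ip y x)
    (hip_mod : ∀ x y b, ip x (rsmul y b) = ip x y * b)
    (hip_pos : ∀ x, 0 ≤ ip x x)
    (hip_nondeg : ∀ x, ip x x = 0 → x = 0)
    -- a representation of B on V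
    (π : B →⋆ₙₐ[ℂ] (V →L[ℂ] V)) :
    ∀ (n : ℕ) (x : Fin n → X) (v : Fin n → V),
      0 ≤ ∑ i : Fin n, ∑ j : Fin n,
        (inner ℂ (v i) (π (ip (x i) (x j)) (v j)) : ℂ) := by
  letI : CStarAlgebra B := { }
  -- basic bilinearity facts for `ip`
  have ip_neg_r : ∀ x' y' : X, ip x' (-y') = -(ip x' y') := by
    intro x' y'
    have h0 := hip_addr x' y' (-y')
    rw [add_neg_cancel] at h0
    have hz : ip x' 0 = 0 := by
      have h1 := hip_addr x' 0 0
      rw [add_zero] at h1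
      exact (left_eq_add.mp h1)
    rw [hz] at h0
    exact eq_neg_of_add_eq_zero_right h0.symm
  have ip_sub_r : ∀ x' y' z' : X, ip x' (y' - z') = ip x' y' - ip x' z' := by
    intro x' y' z'
    rw [sub_eq_add_neg, hip_addr, ip_neg_r, ← sub_eq_add_neg]
  have ip_sub_l : ∀ x' y' z' : X, ip (y' - z') x' = ip y' x' - ip z' x' := by
    intro x' y' z'
    rw [← hip_star, ip_sub_r, star_sub, hip_star, hip_star]
  have ip_rsmul_l : ∀ (z' : X) (c : B) (w' : X),
      ip (rsmul z' c) w' = star c * ip z' w' := by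
    intro z' c w'
    rw [← hip_star w', hip_mod, star_mul, hip_star]
  -- moving operators across the inner product
  have hmove : ∀ (b b' : B) (w w' : V),
      (inner ℂ w ((π (star b * b')) w') : ℂ) = inner ℂ ((π b) w) ((π b') w') := by
    intro b b' w w'
    rw [map_mul, map_star, ContinuousLinearMap.mul_apply,
      ContinuousLinearMap.star_eq_adjoint, ContinuousLinearMap.adjoint_inner_right]
  -- positivity transfer through π
  have hpos : ∀ b : B, 0 ≤ b → ∀ w : V, 0 ≤ (inner ℂ w ((π b) w) : ℂ) := by
    intro b hb w
    have hb' : b = star (cfc Real.sqrt b) * cfc Real.sqrt b := by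
      have hsa : IsSelfAdjoint (cfc Real.sqrt b) := cfc_predicate _ b
      rw [hsa.star_eq]
      calc b = cfc (fun t : ℝ => t) b := (cfc_id' ℝ b hb.isSelfAdjoint).symm
        _ = cfc (fun t : ℝ => Real.sqrt t * Real.sqrt t) b :=
            cfc_congr fun t ht => (Real.mul_self_sqrt (spectrum_nonneg_of_nonneg hb ht)).symm
        _ = _ := cfc_mul _ _ b Real.continuous_sqrt.continuousOn Real.continuous_sqrt.continuousOn
    rw [hb', hmove, inner_self_eq_norm_sq_to_K]
    norm_cast
    positivity
  intro n
  induction n with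
  | zero => intro x v; simp
  | succ n IH =>
    intro x v
    set l : Fin (n + 1) := Fin.last n with hl
    -- the key estimate, for every ε > 0
    have key : ∀ ε : ℝ, 0 < ε →
        0 ≤ (∑ i : Fin (n+1), ∑ j : Fin (n+1),
            (inner ℂ (v i) (π (ip (x i) (x j)) (v j)) : ℂ))
          + ((ε / 2 * ‖v l‖ ^ 2 : ℝ) : ℂ) := by
      intro ε hε
      set z : X := x l with hz
      set vl : V := v l with hvl
      set a : B := ip z z with ha_def
      have ha : 0 ≤ a := hip_pos z
      have hsa : IsSelfAdjoint a := ha.isSelfAdjoint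
      have haspec : ∀ t ∈ spectrum ℝ a, 0 ≤ t := spectrum_nonneg_of_nonneg ha
      set m : ℝ → ℝ := fun t => max t 0 with hm_def
      have hmc : Continuous m := continuous_id.max continuous_const
      have hm0 : ∀ t, 0 ≤ m t := fun t => le_max_right t 0
      have hd1 : ∀ t, 0 < m t + ε := fun t => by have := hm0 t; linarith
      have hd2 : ∀ t, 0 < m t + 2 * ε := fun t => by have := hm0 t; linarith
      set fq : ℝ → ℝ := fun t => (m t + ε)⁻¹ with hfq_def
      set fd : ℝ → ℝ := fun t => (m t + 2 * ε) / (m t + ε) ^ 2 with hfd_def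
      set fs : ℝ → ℝ := fun t => Real.sqrt (fd t) with hfs_def
      set fr : ℝ → ℝ := fun t => Real.sqrt ((m t + ε) ^ 2 / (m t + 2 * ε)) with hfr_def
      set fh : ℝ → ℝ := fun t => ε ^ 2 / (m t + 2 * ε) with hfh_def
      have hcq : Continuous fq := (hmc.add continuous_const).inv₀ fun t => (hd1 t).ne'
      have hcd : Continuous fd :=
        (hmc.add continuous_const).div ((hmc.add continuous_const).pow 2)
          fun t => pow_ne_zero 2 (hd1 t).ne'
      have hcs : Continuous fs := Real.continuous_sqrt.comp hcd
      have hcr : Continuous fr := Real.continuous_sqrt.comp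
        (((hmc.add continuous_const).pow 2).div (hmc.add continuous_const)
          fun t => (hd2 t).ne')
      have hch : Continuous fh :=
        continuous_const.div (hmc.add continuous_const) fun t => (hd2 t).ne'
      set q : B := cfc fq a with hq_def
      set s : B := cfc fs a with hs_def
      set r : B := cfc fr a with hr_def
      set h : B := cfc fh a with hh_def
      have hsq : IsSelfAdjoint q := cfc_predicate fq a
      have hss : IsSelfAdjoint s := cfc_predicate fs a
      have hsr : IsSelfAdjoint r := cfc_predicate fr a
      have hfd_pos : ∀ t, 0 < fd t := fun t => div_pos (hd2 t) (pow_pos (hd1 t) 2)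
      -- key identity A : s * s = q + q - q * (a * q)
      have haq : cfc (fun t : ℝ => t * fq t) a = a * q := by
        rw [cfc_mul (fun t : ℝ => t) fq a continuous_id.continuousOn hcq.continuousOn, cfc_id' ℝ a hsa]
      have hqaq : cfc (fun t : ℝ => fq t * (t * fq t)) a = q * (a * q) := by
        rw [cfc_mul fq (fun t : ℝ => t * fq t) a hcq.continuousOn (continuous_id.mul hcq).continuousOn, haq]
      have keyA : s * s = q + q - q * (a * q) := by
        rw [← hqaq, ← cfc_add a fq fq hcq.continuousOn hcq.continuousOn,
          ← cfc_sub (fun t : ℝ => fq t + fq t) (fun t : ℝ => fq t * (t * fq t)) a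
            ((hcq.add hcq).continuousOn) ((hcq.mul (continuous_id.mul hcq)).continuousOn),
          ← cfc_mul fs fs a hcs.continuousOn hcs.continuousOn]
        apply cfc_congr
        intro t ht
        have ht0 : 0 ≤ t := haspec t ht
        have hmt : m t = t := max_eq_left ht0
        have h1 : Real.sqrt (fd t) * Real.sqrt (fd t) = fd t :=
          Real.mul_self_sqrt (hfd_pos t).le
        simp only [hfs_def, hfd_def, hfq_def, hmt] at h1 ⊢
        rw [h1]
        field_simp
        ring
      -- key identity B : r * s = 1 and s * r = 1
      have keyB : r * s = 1 := by
        rw [← cfc_mul fr fs a hcr.continuousOn hcs.continuousOn, ← cfc_const_one ℝ a hsa]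
        apply cfc_congr
        intro t _
        have h1 : (0:ℝ) ≤ (m t + ε) ^ 2 / (m t + 2 * ε) :=
          div_nonneg (sq_nonneg _) (hd2 t).le
        simp only [hfr_def, hfs_def, hfd_def]
        rw [← Real.sqrt_mul h1]
        rw [show (m t + ε) ^ 2 / (m t + 2 * ε) * ((m t + 2 * ε) / (m t + ε) ^ 2) = 1 by
          field_simp
          exact div_self (mul_ne_zero (hd1 t).ne' (show (0:ℝ) < m t + ε * 2 by linarith [hd2 t]).ne')]
        exact Real.sqrt_one
      have keyB' : s * r = 1 := by
        rw [← cfc_mul fs fr a hcs.continuousOn hcr.continuousOn, ← cfc_const_one ℝ a hsa]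
        apply cfc_congr
        intro t _
        have h1 : (0:ℝ) ≤ fd t := (hfd_pos t).le
        simp only [hfr_def, hfs_def, hfd_def] at h1 ⊢
        rw [← Real.sqrt_mul h1]
        rw [show (m t + 2 * ε) / (m t + ε) ^ 2 * ((m t + ε) ^ 2 / (m t + 2 * ε)) = 1 by
          field_simp
          exact div_self (mul_ne_zero (hd2 t).ne' (hd1 t).ne')]
        exact Real.sqrt_one
      -- key identity C : a = r * r - h
      have keyC : a = r * r - h := by
        have h2 : cfc (fun t : ℝ => t + fh t) a = a + h := by
          rw [cfc_add a (fun t : ℝ => t) fh continuous_id.continuousOn hch.continuousOn, cfc_id' ℝ a hsa]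
        have h3 : r * r = a + h := by
          rw [← h2, ← cfc_mul fr fr a hcr.continuousOn hcr.continuousOn]
          apply cfc_congr
          intro t ht
          have ht0 : 0 ≤ t := haspec t ht
          have hmt : m t = t := max_eq_left ht0
          have h1 : (0:ℝ) ≤ (m t + ε) ^ 2 / (m t + 2 * ε) :=
            div_nonneg (sq_nonneg _) (hd2 t).le
          simp only [hfr_def, hfh_def, hmt] at h1 ⊢
          rw [Real.mul_self_sqrt h1]
          field_simp
          ring
        rw [h3, add_sub_cancel_right]
      -- h is small and nonnegative
      have keyD : 0 ≤ h := cfc_nonneg fun t _ => div_nonneg (sq_nonneg ε) (hd2 t).le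
      have keyE : 0 ≤ ((ε / 2 : ℝ) : ℂ) • (1 : B) - h := by
        have hconst : ((ε / 2 : ℝ) : ℂ) • (1 : B) = cfc (fun _ : ℝ => ε / 2) a := by
          rw [cfc_const (ε / 2) a hsa, Algebra.algebraMap_eq_smul_one,
            ← algebraMap_smul ℂ (ε / 2) (1 : B), Complex.coe_algebraMap]
        rw [hconst, ← cfc_sub (fun _ : ℝ => ε / 2) fh a continuous_const.continuousOn hch.continuousOn]
        apply cfc_nonneg
        intro t _
        have h1 : ε ^ 2 / (m t + 2 * ε) ≤ ε / 2 := by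
          rw [div_le_iff₀ (hd2 t)]
          nlinarith [hm0 t]
        simp only [hfh_def]
        linarith
      -- the Gram–Schmidt style decomposition of the inner products
      set g : Fin n → B := fun i => ip z (x i.castSucc) with hg_def
      set y : Fin n → X := fun i => x i.castSucc - rsmul z (q * g i) with hy_def
      have decomp : ∀ i j : Fin n,
          ip (x i.castSucc) (x j.castSucc)
            = ip (y i) (y j) + star (s * g i) * (s * g j) := by
        intro i j
        have e1 : ip (y i) (y j)
            = ip (x i.castSucc) (x j.castSucc)
              - ip (x i.castSucc) (rsmul z (q * g j))
              - (ip (rsmul z (q * g i)) (x j.castSucc)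
                 - ip (rsmul z (q * g i)) (rsmul z (q * g j))) := by
          rw [hy_def]
          simp only []
          rw [ip_sub_l, ip_sub_r, ip_sub_r]
        have e2 : ip (x i.castSucc) (rsmul z (q * g j))
            = star (g i) * (q * g j) := by
          rw [hip_mod, ← hip_star, hg_def]
        have e3 : ip (rsmul z (q * g i)) (x j.castSucc)
            = (star (g i) * q) * g j := by
          rw [ip_rsmul_l, star_mul, hsq.star_eq, hg_def, mul_assoc]
        have e4 : ip (rsmul z (q * g i)) (rsmul z (q * g j))
            = (star (g i) * q) * (a * (q * g j)) := by
          rw [ip_rsmul_l, hip_mod, star_mul, hsq.star_eq, ← ha_def, mul_assoc]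
        have e5 : star (s * g i) * (s * g j)
            = star (g i) * ((s * s) * g j) := by
          rw [star_mul, hss.star_eq]
          noncomm_ring
        rw [e1, e2, e3, e4, e5, keyA]
        noncomm_ring
      -- assemble the sums
      set u : V := ∑ j : Fin n, (π (s * g j)) (v j.castSucc) with hu_def
      set w : V := (π r) vl with hw_def
      have f1 : (∑ i : Fin n, ∑ j : Fin n,
            (inner ℂ (v i.castSucc) (π (ip (x i.castSucc) (x j.castSucc)) (v j.castSucc)) : ℂ))
          = (∑ i : Fin n, ∑ j : Fin n,
              (inner ℂ (v i.castSucc) (π (ip (y i) (y j)) (v j.castSucc)) : ℂ))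
            + inner ℂ u u := by
        have : ∀ i j : Fin n,
            (inner ℂ (v i.castSucc) (π (ip (x i.castSucc) (x j.castSucc)) (v j.castSucc)) : ℂ)
              = inner ℂ (v i.castSucc) (π (ip (y i) (y j)) (v j.castSucc))
                + inner ℂ ((π (s * g i)) (v i.castSucc)) ((π (s * g j)) (v j.castSucc)) := by
          intro i j
          rw [decomp i j, map_add, ContinuousLinearMap.add_apply, inner_add_right, hmove]
        simp only [this, Finset.sum_add_distrib]
        congr 1
        rw [hu_def, sum_inner]
        congr 1
        ext i
        rw [inner_sum]
      have f2 : (∑ j : Fin n,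
            (inner ℂ vl (π (ip z (x j.castSucc)) (v j.castSucc)) : ℂ)) = inner ℂ w u := by
        rw [hu_def, inner_sum]
        congr 1
        ext j
        have hb : star r * (s * g j) = ip z (x j.castSucc) := by
          rw [hsr.star_eq, ← mul_assoc, keyB, one_mul, hg_def]
        rw [hw_def, ← hmove, hb]
      have f3 : (∑ i : Fin n,
            (inner ℂ (v i.castSucc) (π (ip (x i.castSucc) z) vl) : ℂ)) = inner ℂ u w := by
        rw [hu_def, sum_inner]
        congr 1
        ext i
        have hb : star (s * g i) * r = ip (x i.castSucc) z := by
          rw [star_mul, hss.star_eq, mul_assoc, keyB', mul_one, hg_def, hip_star]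
        rw [hw_def, ← hmove, hb]
      have f4 : (inner ℂ vl (π (ip z z) vl) : ℂ)
          = inner ℂ w w - inner ℂ vl (π h vl) := by
        rw [← ha_def, keyC, map_sub, ContinuousLinearMap.sub_apply, inner_sub_right]
        congr 1
        have hb : star r * r = r * r := by rw [hsr.star_eq]
        rw [hw_def, ← hmove, hb]
      -- bound on the error term
      have hHbound : (inner ℂ vl (π h vl) : ℂ) ≤ ((ε / 2 * ‖vl‖ ^ 2 : ℝ) : ℂ) := by
        have h0 := hpos _ keyE vl
        have h1 : (inner ℂ vl (π (((ε / 2 : ℝ) : ℂ) • (1 : B) - h) vl) : ℂ)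
            = ((ε / 2 : ℝ) : ℂ) * inner ℂ vl ((π 1) vl) - inner ℂ vl ((π h) vl) := by
          rw [map_sub, map_smul, ContinuousLinearMap.sub_apply,
            ContinuousLinearMap.smul_apply, inner_sub_right, inner_smul_right]
        rw [h1, sub_nonneg] at h0
        have h2 : (inner ℂ vl ((π 1) vl) : ℂ) = ((‖(π 1) vl‖ ^ 2 : ℝ) : ℂ) := by
          have : (inner ℂ vl ((π (star (1:B) * 1)) vl) : ℂ)
              = inner ℂ ((π 1) vl) ((π 1) vl) := hmove 1 1 vl vl
          rw [star_one, one_mul] at this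
          rw [this, inner_self_eq_norm_sq_to_K]
          norm_cast
        have h3 : ‖(π (1:B)) vl‖ ≤ ‖vl‖ := by
          have hcs2 : ‖(inner ℂ vl ((π 1) vl) : ℂ)‖ ≤ ‖vl‖ * ‖(π (1:B)) vl‖ :=
            norm_inner_le_norm vl _
          rw [h2] at hcs2
          have h4 : ‖(((‖(π (1:B)) vl‖ ^ 2 : ℝ)) : ℂ)‖ = ‖(π (1:B)) vl‖ ^ 2 := by
            rw [Complex.norm_real, Real.norm_eq_abs, abs_of_nonneg (sq_nonneg _)]
          rw [h4] at hcs2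
          nlinarith [norm_nonneg ((π (1:B)) vl), norm_nonneg vl]
        calc (inner ℂ vl (π h vl) : ℂ)
            ≤ ((ε / 2 : ℝ) : ℂ) * inner ℂ vl ((π 1) vl) := h0
          _ = ((ε / 2 * ‖(π (1:B)) vl‖ ^ 2 : ℝ) : ℂ) := by rw [h2]; push_cast; ring
          _ ≤ ((ε / 2 * ‖vl‖ ^ 2 : ℝ) : ℂ) := by
              rw [Complex.real_le_real]
              have h5 := norm_nonneg ((π (1:B)) vl)
              have hp2 : ‖(π (1:B)) vl‖ ^ 2 ≤ ‖vl‖ ^ 2 := by nlinarith [h3, h5]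
              nlinarith [hp2, hε]
      -- split of the big sum
      have hsplit : (∑ i : Fin (n+1), ∑ j : Fin (n+1),
            (inner ℂ (v i) (π (ip (x i) (x j)) (v j)) : ℂ))
          = (∑ i : Fin n, ∑ j : Fin n,
              (inner ℂ (v i.castSucc) (π (ip (x i.castSucc) (x j.castSucc)) (v j.castSucc)) : ℂ))
            + ((∑ i : Fin n, (inner ℂ (v i.castSucc) (π (ip (x i.castSucc) z) vl) : ℂ))
            + ((∑ j : Fin n, (inner ℂ vl (π (ip z (x j.castSucc)) (v j.castSucc)) : ℂ))
            + (inner ℂ vl (π (ip z z) vl) : ℂ))) := by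
        rw [Fin.sum_univ_castSucc
          (f := fun i => ∑ j : Fin (n+1), (inner ℂ (v i) (π (ip (x i) (x j)) (v j)) : ℂ))]
        simp only [Fin.sum_univ_castSucc, Finset.sum_add_distrib, ← hl, ← hz, ← hvl]
        ring
      have hSy : 0 ≤ (∑ i : Fin n, ∑ j : Fin n,
          (inner ℂ (v i.castSucc) (π (ip (y i) (y j)) (v j.castSucc)) : ℂ)) :=
        IH y (fun i => v i.castSucc)
      have hQ : 0 ≤ (inner ℂ (u + w) (u + w) : ℂ) := by
        rw [inner_self_eq_norm_sq_to_K]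
        norm_cast
        positivity
      rw [hsplit, f1, f2, f3, f4]
      have expand : (inner ℂ (u + w) (u + w) : ℂ)
          = inner ℂ u u + inner ℂ u w + inner ℂ w u + inner ℂ w w := inner_add_add_self u w
      have final : 0 ≤ ((∑ i : Fin n, ∑ j : Fin n,
            (inner ℂ (v i.castSucc) (π (ip (y i) (y j)) (v j.castSucc)) : ℂ))
          + (inner ℂ (u + w) (u + w) : ℂ))
          + (((ε / 2 * ‖vl‖ ^ 2 : ℝ) : ℂ) - inner ℂ vl (π h vl)) :=
        add_nonneg (add_nonneg hSy hQ) (by rwa [sub_nonneg])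
      calc (0:ℂ) ≤ _ := final
        _ = ((∑ i : Fin n, ∑ j : Fin n,
            (inner ℂ (v i.castSucc) (π (ip (y i) (y j)) (v j.castSucc)) : ℂ))
            + inner ℂ u u)
            + ((inner ℂ u w : ℂ) + ((inner ℂ w u : ℂ)
              + ((inner ℂ w w : ℂ) - inner ℂ vl (π h vl))))
            + ((ε / 2 * ‖vl‖ ^ 2 : ℝ) : ℂ) := by rw [expand]; ring
    -- conclude from the family of estimates
    set S : ℂ := ∑ i : Fin (n+1), ∑ j : Fin (n+1),
      (inner ℂ (v i) (π (ip (x i) (x j)) (v j)) : ℂ) with hS_def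
    have key' : ∀ δ : ℝ, 0 < δ → 0 ≤ S + (δ : ℂ) := by
      intro δ hδ
      set N : ℝ := ‖v l‖ ^ 2 with hN
      have hN0 : 0 ≤ N := sq_nonneg _
      have hεpos : 0 < 2 * δ / (N + 1) := by positivity
      have h1 := key (2 * δ / (N + 1)) hεpos
      have h2 : (2 * δ / (N + 1)) / 2 * N ≤ δ := by
        rw [div_div, div_mul_eq_mul_div, div_le_iff₀ (by positivity)]
        nlinarith
      calc (0:ℂ) ≤ S + (((2 * δ / (N + 1)) / 2 * N : ℝ) : ℂ) := h1
        _ ≤ S + (δ : ℂ) := by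
            apply add_le_add_right
            rw [Complex.real_le_real]
            exact h2
    rw [Complex.le_def]
    constructor
    · refine le_of_forall_pos_le_add fun δ hδ => ?_
      have := key' δ hδ
      rw [Complex.le_def] at this
      simpa using this.1
    · have := key' 1 one_pos
      rw [Complex.le_def] at this
      simpa using this.2
end

section
/- Let G and H be unimodular locally compact groups with commuting unitary representations on a Hilbert space V_ω, and let Θ be the completion of a dense invariant subspace 𝕊 ⊆ V_ω as a right Hilbert C*-module over C*_r(H) with inner product ⟨x,y⟩_H(h) = ⟨x, ω(h)y⟩. Then the map 𝕊 ⊗ C_c(H) → 𝕊, x ⊗ f ↦ x·f := ∫_H f(h)ω(h⁻¹)x dh, is isometric with respect to the interior tensor product form arising from the left regular representation ρ of H on L²(H): ⟨x·f, y·g⟩_{V_ω} = ⟨f, ρ(⟨x,y⟩_H)g⟩_{L²(H)} for all x, y ∈ 𝕊 and f, g ∈ C_c(H). -/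
open MeasureTheory
open scoped ComplexConjugate

/-- The map `x ⊗ f ↦ x·f = ∫_H f(h) ω(h⁻¹)x dh` is isometric from the
interior tensor product (over the left regular representation `ρ` of `H` on `L²(H)`) to
the representation space: `⟨x·f, y·g⟩ = ⟨f, ρ(⟨x,y⟩_H) g⟩_{L²(H)}`, where
`⟨x,y⟩_H(h) = ⟨x, ω(h)y⟩` and `ρ(k)g = k ∗ g`. -/
theorem stmt15
    {H V : Type*} [Group H] [TopologicalSpace H] [MeasurableSpace H] [BorelSpace H]
    [IsTopologicalGroup H] [LocallyCompactSpace H]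
    [NormedAddCommGroup V] [InnerProductSpace ℂ V] [CompleteSpace V]
    (μ : Measure H) [μ.IsMulLeftInvariant] [μ.IsMulRightInvariant] [μ.IsInvInvariant]
    [IsFiniteMeasureOnCompacts μ]
    -- commuting unitary representations: here only the H-action ω is needed
    (ω : H → (V →L[ℂ] V))
    (hω_mul : ∀ g h : H, ω (g * h) = (ω g).comp (ω h))
    (hω_one : ω 1 = ContinuousLinearMap.id ℂ V)
    (hω_unitary : ∀ (h : H) (v w : V), (inner ℂ (ω h v) (ω h w) : ℂ) = inner ℂ v w)
    -- the dense invariant subspace 𝕊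
    (S : Submodule ℂ V) (hS_dense : Dense (S : Set V))
    (hS_inv : ∀ h : H, ∀ x ∈ S, ω h x ∈ S)
    (hS_meas : ∀ x ∈ S, AEStronglyMeasurable (fun s : H => ω s x) μ)
    -- matrix coefficients lie in L¹ ∩ L²
    (hL1 : ∀ x ∈ S, ∀ y ∈ S, Integrable (fun h : H => (inner ℂ x (ω h y) : ℂ)) μ)
    (hL2 : ∀ x ∈ S, ∀ y ∈ S, MemLp (fun h : H => (inner ℂ x (ω h y) : ℂ)) 2 μ) :
    ∀ x ∈ S, ∀ y ∈ S, ∀ f g : H → ℂ,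
      Continuous f → HasCompactSupport f → Continuous g → HasCompactSupport g →
      (inner ℂ (∫ h, f h • (ω h⁻¹ x) ∂μ) (∫ h, g h • (ω h⁻¹ y) ∂μ) : ℂ)
        = ∫ s, conj (f s) * (∫ t, (inner ℂ x (ω t y) : ℂ) * g (t⁻¹ * s) ∂μ) ∂μ := by
  intro x hx y hy f g hf hfc hg hgc
  -- ω is norm preserving
  have hnorm : ∀ (h : H) (v : V), ‖ω h v‖ = ‖v‖ := by
    intro h v
    have h1 : (inner ℂ (ω h v) (ω h v) : ℂ) = inner ℂ v v := hω_unitary h v v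
    rw [inner_self_eq_norm_sq_to_K, inner_self_eq_norm_sq_to_K] at h1
    have h2 : ‖ω h v‖ ^ 2 = ‖v‖ ^ 2 := by exact_mod_cast h1
    nlinarith [norm_nonneg (ω h v), norm_nonneg v]
  -- composition identity
  have hcomp : ∀ (s t : H) (v : V), ω s (ω t v) = ω (s * t) v := by
    intro s t v
    rw [hω_mul s t]; rfl
  have key : ∀ s t : H, (inner ℂ (ω s⁻¹ x) (ω t⁻¹ y) : ℂ) = inner ℂ x (ω (s * t⁻¹) y) := by
    intro s t
    have h1 := hω_unitary s (ω s⁻¹ x) (ω t⁻¹ y)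
    rw [hcomp s s⁻¹ x, hcomp s t⁻¹ y, mul_inv_cancel, hω_one] at h1
    simpa using h1.symm
  -- measurability and integrability
  have hmeas : ∀ z ∈ S, AEStronglyMeasurable (fun s : H => ω s⁻¹ z) μ := fun z hz =>
    (hS_meas z hz).comp_measurePreserving (Measure.measurePreserving_inv μ)
  have hInt : ∀ z ∈ S, ∀ φ : H → ℂ, Continuous φ → HasCompactSupport φ →
      Integrable (fun h => φ h • ω h⁻¹ z) μ := by
    intro z hz φ hφ hφc
    refine Integrable.mono' (((hφ.integrable_of_hasCompactSupport hφc).norm).mul_const ‖z‖)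
      (hφ.aestronglyMeasurable.smul (hmeas z hz)) ?_
    filter_upwards with h
    rw [norm_smul, hnorm]
  have hIntX := hInt x hx f hf hfc
  have hIntY := hInt y hy g hg hgc
  set Y := ∫ h, g h • ω h⁻¹ y ∂μ with hY
  -- expand the inner product of integrals
  have step1 : (inner ℂ (∫ h, f h • ω h⁻¹ x ∂μ) Y : ℂ)
      = ∫ s, (inner ℂ (f s • ω s⁻¹ x) Y : ℂ) ∂μ := by
    calc (inner ℂ (∫ h, f h • ω h⁻¹ x ∂μ) Y : ℂ)
        = conj (inner ℂ Y (∫ h, f h • ω h⁻¹ x ∂μ) : ℂ) := by rw [inner_conj_symm]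
      _ = conj (∫ s, (inner ℂ Y (f s • ω s⁻¹ x) : ℂ) ∂μ) := by rw [integral_inner hIntX Y]
      _ = ∫ s, conj (inner ℂ Y (f s • ω s⁻¹ x) : ℂ) ∂μ := by rw [integral_conj]
      _ = ∫ s, (inner ℂ (f s • ω s⁻¹ x) Y : ℂ) ∂μ := by simp_rw [inner_conj_symm]
  rw [step1]
  refine integral_congr_ae (Filter.Eventually.of_forall fun s => ?_)
  -- expand the second slot
  have step2 : (inner ℂ (f s • ω s⁻¹ x) Y : ℂ)
      = conj (f s) * ∫ t, g t * (inner ℂ (ω s⁻¹ x) (ω t⁻¹ y) : ℂ) ∂μ := by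
    rw [inner_smul_left, hY, ← integral_inner hIntY (ω s⁻¹ x)]
    simp_rw [inner_smul_right]
  dsimp only
  rw [step2]
  congr 1
  -- change of variables t ↦ s * t⁻¹ in the convolution integral
  have sub : ∫ t, (inner ℂ x (ω t y) : ℂ) * g (t⁻¹ * s) ∂μ
      = ∫ t, g t * (inner ℂ x (ω (s * t⁻¹) y) : ℂ) ∂μ := by
    have h1 : ∫ t, (inner ℂ x (ω t y) : ℂ) * g (t⁻¹ * s) ∂μ
        = ∫ t, (inner ℂ x (ω (s * t) y) : ℂ) * g ((s * t)⁻¹ * s) ∂μ :=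
      (MeasureTheory.integral_mul_left_eq_self
        (fun t => (inner ℂ x (ω t y) : ℂ) * g (t⁻¹ * s)) s).symm
    have h2 : ∫ t, (inner ℂ x (ω (s * t) y) : ℂ) * g ((s * t)⁻¹ * s) ∂μ
        = ∫ t, (inner ℂ x (ω (s * t⁻¹) y) : ℂ) * g ((s * t⁻¹)⁻¹ * s) ∂μ :=
      (MeasureTheory.integral_inv_eq_self
        (fun t => (inner ℂ x (ω (s * t) y) : ℂ) * g ((s * t)⁻¹ * s)) μ).symm
    rw [h1, h2]
    refine integral_congr_ae (Filter.Eventually.of_forall fun t => ?_)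
    have h3 : (s * t⁻¹)⁻¹ * s = t := by group
    dsimp only
    rw [h3, mul_comm]
  rw [sub]
  refine integral_congr_ae (Filter.Eventually.of_forall fun t => ?_)
  dsimp only
  rw [key]
end
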